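/- Let k > 1 be a positive integer, p an odd prime, and r, s positive integers with s > 1. Then the equation (p^r·k)^x + (2^s·k)^y = ((p^r + 2^s)·k)^z has no positive integer solutions (x, y, z) with x > z > y. -/

import Mathlib

open Finset

lemma geom_parity (B q : ℕ) (hB : B % 2 = 1) :
    (∑ i ∈ range q, B ^ i) % 2 = q % 2 := by
  induction q with
  | zero => simp
  | succ n ih =>
    rw [Finset.sum_range_succ]
    have hBn : B ^ n % 2 = 1 := by
      have := Nat.pow_mod B n 2
      simp [hB] at this
      omega
    omega

lemma geom_lower (B q : ℕ) (hB : 1 ≤ B) (hq : 2 ≤ q) :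
    1 + B ≤ ∑ i ∈ range q, B ^ i := by
  obtain ⟨n, rfl⟩ : ∃ n, q = n + 2 := ⟨q - 2, by omega⟩
  rw [Finset.sum_range_succ]
  have h1 : 1 ≤ ∑ i ∈ range (n + 1), B ^ i := by
    calc 1 = B ^ 0 := by simp
    _ ≤ ∑ i ∈ range (n + 1), B ^ i :=
      Finset.single_le_sum (fun i _ => Nat.zero_le _) (by simp)
  have h2 : B ≤ B ^ (n + 1) := Nat.le_self_pow (by omega) B
  omega

lemma geom_dvd (B q : ℕ) (hB : 1 ≤ B) :
    (∑ i ∈ range q, B ^ i) ∣ B ^ q - 1 := by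
  have key := geom_sum_mul (B : ℤ) q
  have hc : ((B ^ q - 1 : ℕ) : ℤ) = (B : ℤ) ^ q - 1 := by
    have : 1 ≤ B ^ q := Nat.one_le_pow _ _ hB
    push_cast [this]
    ring
  have h : ((∑ i ∈ range q, B ^ i : ℕ) : ℤ) ∣ ((B ^ q - 1 : ℕ) : ℤ) := by
    rw [hc]
    push_cast
    exact ⟨(B : ℤ) - 1, key.symm⟩
  exact_mod_cast h

lemma odd_dvd_two_mul_prime_pow (p M m D : ℕ) (hp : p.Prime)
    (hD : D ∣ p ^ M * 2 ^ m) (hodd : D % 2 = 1) : ∃ c, D = p ^ c := by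
  have hcop : Nat.Coprime D (2 ^ m) := by
    apply Nat.Coprime.pow_right
    exact (Nat.prime_two.coprime_iff_not_dvd.mpr (by omega)).symm
  have hDp : D ∣ p ^ M := hcop.dvd_of_dvd_mul_right hD
  obtain ⟨c, _, rfl⟩ := (Nat.dvd_prime_pow hp).mp hDp
  exact ⟨c, rfl⟩

lemma sq_sub_one_ne_two_pow (C e : ℕ) (h7 : 7 ≤ C) : C ^ 2 - 1 ≠ 2 ^ e := by
  intro h
  have hfac : (C + 1) * (C - 1) = 2 ^ e := by
    rw [← sq_tsub_sq C 1]
    simpa using h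
  have h1 : C - 1 ∣ 2 ^ e := ⟨C + 1, by rw [← hfac]; ring⟩
  have h2 : C + 1 ∣ 2 ^ e := ⟨C - 1, by rw [← hfac]⟩
  obtain ⟨α, hα, hCα⟩ := (Nat.dvd_prime_pow Nat.prime_two).mp h1
  obtain ⟨β, hβ, hCβ⟩ := (Nat.dvd_prime_pow Nat.prime_two).mp h2
  have hα3 : 3 ≤ α := by
    by_contra hc
    push_neg at hc
    interval_cases α <;> omega
  have hβ3 : 3 ≤ β := by
    by_contra hc
    push_neg at hc
    interval_cases β <;> omega
  have d1 : (8 : ℕ) ∣ C - 1 := by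
    rw [hCα]
    exact pow_dvd_pow 2 hα3
  have d2 : (8 : ℕ) ∣ C + 1 := by
    rw [hCβ]
    exact pow_dvd_pow 2 hβ3
  omega

lemma pow_sub_one_ne_two_pow (n w e : ℕ) (h7 : 7 ≤ n) (hodd : n % 2 = 1)
    (hw : 2 ≤ w) : n ^ w - 1 ≠ 2 ^ e := by
  intro h
  rcases Nat.even_or_odd w with hev | hod
  · obtain ⟨u, rfl⟩ := hev
    have hu : 1 ≤ u := by omega
    have hC : 7 ≤ n ^ u := le_trans h7 (Nat.le_self_pow (by omega) n)
    have : (n ^ u) ^ 2 - 1 = 2 ^ e := by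
      rw [← pow_mul, mul_comm]
      simpa [two_mul] using h
    exact sq_sub_one_ne_two_pow (n ^ u) e hC this
  · set S := ∑ i ∈ range w, n ^ i with hS
    have hdvd : S ∣ 2 ^ e := h ▸ geom_dvd n w (by omega)
    obtain ⟨γ, _, hγ⟩ := (Nat.dvd_prime_pow Nat.prime_two).mp hdvd
    have hpar : S % 2 = 1 := by
      have h1 := geom_parity n w hodd
      have h2 : w % 2 = 1 := Nat.odd_iff.mp hod
      omega
    have hγ0 : γ = 0 := by
      by_contra hc
      have : 2 ∣ 2 ^ γ := dvd_pow_self 2 hc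
      omega
    have hlow : 1 + n ≤ S := geom_lower n w (by omega) hw
    rw [hγ0] at hγ
    omega

lemma mersenne_catalan (p n e : ℕ) (hp : p.Prime) (hodd : p % 2 = 1)
    (hn : 2 ≤ n) (h : p ^ n + 1 = 2 ^ e) : False := by
  have hp3 : 3 ≤ p := by
    have := hp.two_le
    omega
  rcases Nat.even_or_odd n with hev | hod
  · -- n even : p^n is an odd square, ≡ 1 mod 8
    obtain ⟨u, rfl⟩ := hev
    have hu : 1 ≤ u := by omega
    have hCodd : p ^ u % 2 = 1 := Nat.odd_iff.mp (Odd.pow (Nat.odd_iff.mpr hodd))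
    obtain ⟨d, hd⟩ : ∃ d, p ^ u = 2 * d + 1 := ⟨p ^ u / 2, by omega⟩
    obtain ⟨ee, hee⟩ : ∃ ee, d * (d + 1) = 2 * ee := (Nat.even_mul_succ_self d).exists_two_nsmul _
    have hsq : p ^ (u + u) = 8 * ee + 1 := by
      have : p ^ (u + u) = (p ^ u) * (p ^ u) := by rw [← pow_add]
      rw [this, hd]
      nlinarith [hee]
    have h9 : 9 ≤ p ^ (u + u) := by
      calc (9:ℕ) = 3 ^ 2 := by norm_num
      _ ≤ p ^ 2 := Nat.pow_le_pow_left hp3 2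
      _ ≤ p ^ (u + u) := Nat.pow_le_pow_right (by omega) (by omega)
    have he4 : 3 ≤ e := by
      by_contra hc
      push_neg at hc
      interval_cases e <;> omega
    have : (8:ℕ) ∣ 2 ^ e := pow_dvd_pow 2 he4
    omega
  · -- n odd
    have hdvd : (p + 1) ∣ p ^ n + 1 := by
      have key : ((p : ℤ) + 1) ∣ (p : ℤ) ^ n + 1 := by
        have h1 : ((p : ℤ) - (-1)) ∣ ((p : ℤ) ^ n - (-1) ^ n) := sub_dvd_pow_sub_pow _ _ n
        rw [Odd.neg_one_pow hod] at h1
        simpa using h1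
      exact_mod_cast key
    rw [h] at hdvd
    obtain ⟨f, _, hf⟩ := (Nat.dvd_prime_pow Nat.prime_two).mp hdvd
    -- p = 2^f - 1, f ≥ 2
    have hf2 : 2 ≤ f := by
      by_contra hc
      push_neg at hc
      interval_cases f <;> omega
    set g := 2 ^ (f - 1) with hg
    have hgf : 2 ^ f = 2 * g := by
      rw [hg, ← pow_succ']
      congr 1
      omega
    have hpg : p = 2 * g - 1 := by omega
    have hg2 : 2 ≤ g := by
      have : 2 ^ 1 ≤ 2 ^ (f - 1) := Nat.pow_le_pow_right (by omega) (by omega)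
      omega
    have hp1 : p - 1 = 2 * (g - 1) := by omega
    have hsq : p ^ 2 - 1 = (2 ^ (f + 1)) * (g - 1) := by
      have h2 : p ^ 2 - 1 = (p + 1) * (p - 1) := by simpa using sq_tsub_sq p 1
      rw [h2, hf, hp1, pow_succ]
      ring
    have hdvdsq : 2 ^ (f + 1) ∣ p ^ 2 - 1 := ⟨g - 1, hsq⟩
    obtain ⟨u, rfl⟩ := hod
    have hu1 : 1 ≤ u := by omega
    have hnp : p ^ (2 * u + 1) - p = p * ((p ^ 2) ^ u - 1) := by
      rw [Nat.mul_sub, mul_one, ← pow_mul, mul_comm p (p ^ (2 * u)), ← pow_succ]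
    have t1 : p ^ 2 - 1 ∣ (p ^ 2) ^ u - 1 := by
      simpa using Nat.sub_dvd_pow_sub_pow (p ^ 2) 1 u
    have hd2 : 2 ^ (f + 1) ∣ p ^ (2 * u + 1) - p :=
      hnp ▸ Dvd.dvd.mul_left (hdvdsq.trans t1) p
    have hpn : p ^ 2 ≤ p ^ (2 * u + 1) := Nat.pow_le_pow_right (by omega) (by omega)
    have hposq : p < p ^ 2 := by nlinarith
    have hfe : f < e := by
      have hlt : 2 ^ f < 2 ^ e := by omega
      exact (Nat.pow_lt_pow_iff_right one_lt_two).mp hlt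
    have hd3 : 2 ^ (f + 1) ∣ p ^ (2 * u + 1) + 1 := by
      rw [h]
      exact pow_dvd_pow 2 (by omega)
    have hsub : (p ^ (2 * u + 1) + 1) - (p ^ (2 * u + 1) - p) = p + 1 := by
      have hple : p ≤ p ^ (2 * u + 1) := Nat.le_self_pow (by omega) p
      omega
    have hfin : 2 ^ (f + 1) ∣ p + 1 := hsub ▸ Nat.dvd_sub hd3 hd2
    have hle : 2 ^ (f + 1) ≤ p + 1 := Nat.le_of_dvd (by omega) hfin
    have hps : 2 ^ (f + 1) = 2 * 2 ^ f := by rw [pow_succ]; ring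
    omega

lemma fermat_catalan (p n e : ℕ) (hp : p.Prime) (hodd : p % 2 = 1)
    (hn : 3 ≤ n) (h : p ^ n = 2 ^ e + 1) : False := by
  have hp3 : 3 ≤ p := by
    have := hp.two_le
    omega
  rcases Nat.even_or_odd n with hev | hod
  · obtain ⟨u, rfl⟩ := hev
    have hu : 2 ≤ u := by omega
    have hC : 9 ≤ p ^ u := by
      calc (9:ℕ) = 3 ^ 2 := by norm_num
      _ ≤ p ^ 2 := Nat.pow_le_pow_left hp3 2
      _ ≤ p ^ u := Nat.pow_le_pow_right (by omega) hu
    have hsq : (p ^ u) ^ 2 - 1 = 2 ^ e := by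
      have h2 : (p ^ u) ^ 2 = 2 ^ e + 1 := by
        rw [sq, ← pow_add]
        exact h
      rw [h2, Nat.add_sub_cancel]
    exact sq_sub_one_ne_two_pow (p ^ u) e (by omega) hsq
  · -- n odd
    have hdvd : (p - 1) ∣ 2 ^ e := by
      have h1 : p - 1 ∣ p ^ n - 1 := by simpa using Nat.sub_dvd_pow_sub_pow p 1 n
      rw [h] at h1
      simpa using h1
    obtain ⟨f, _, hf⟩ := (Nat.dvd_prime_pow Nat.prime_two).mp hdvd
    have hf1 : 1 ≤ f := by
      by_contra hc
      push_neg at hc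
      interval_cases f <;> omega
    set g := 2 ^ (f - 1) with hg
    have hgf : 2 ^ f = 2 * g := by
      rw [hg, ← pow_succ']
      congr 1
      omega
    have hg1 : 1 ≤ g := Nat.one_le_two_pow
    have hsq : p ^ 2 - 1 = (2 ^ (f + 1)) * (g + 1) := by
      have h2 : p ^ 2 - 1 = (p + 1) * (p - 1) := by simpa using sq_tsub_sq p 1
      have hp1 : p + 1 = 2 * (g + 1) := by omega
      rw [h2, hf, hp1, pow_succ]
      ring
    have hdvdsq : 2 ^ (f + 1) ∣ p ^ 2 - 1 := ⟨g + 1, hsq⟩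
    obtain ⟨u, rfl⟩ := hod
    have hu1 : 1 ≤ u := by omega
    have hnp : p ^ (2 * u + 1) - p = p * ((p ^ 2) ^ u - 1) := by
      rw [Nat.mul_sub, mul_one, ← pow_mul, mul_comm p (p ^ (2 * u)), ← pow_succ]
    have t1 : p ^ 2 - 1 ∣ (p ^ 2) ^ u - 1 := by
      simpa using Nat.sub_dvd_pow_sub_pow (p ^ 2) 1 u
    have hd2 : 2 ^ (f + 1) ∣ p ^ (2 * u + 1) - p :=
      hnp ▸ Dvd.dvd.mul_left (hdvdsq.trans t1) p
    have hpn : p ^ 2 ≤ p ^ (2 * u + 1) := Nat.pow_le_pow_right (by omega) (by omega)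
    have hposq : p < p ^ 2 := by nlinarith
    have hfe : f < e := by
      have hlt : 2 ^ f < 2 ^ e := by omega
      exact (Nat.pow_lt_pow_iff_right one_lt_two).mp hlt
    have hd3 : 2 ^ (f + 1) ∣ p ^ (2 * u + 1) - 1 := by
      have : p ^ (2 * u + 1) - 1 = 2 ^ e := by omega
      rw [this]
      exact pow_dvd_pow 2 (by omega)
    have hsub : (p ^ (2 * u + 1) - 1) - (p ^ (2 * u + 1) - p) = p - 1 := by
      have hple : p ≤ p ^ (2 * u + 1) := Nat.le_self_pow (by omega) p
      omega
    have hfin : 2 ^ (f + 1) ∣ p - 1 := hsub ▸ Nat.dvd_sub hd3 hd2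
    have hle : 2 ^ (f + 1) ≤ p - 1 := Nat.le_of_dvd (by omega) hfin
    have hps : 2 ^ (f + 1) = 2 * 2 ^ f := by rw [pow_succ]; ring
    omega

lemma zmod_pow_one_add (R : Type*) [CommRing R] (e : R) (he : e * e = 0) (i : ℕ) :
    (1 + e) ^ i = 1 + (i : R) * e := by
  induction i with
  | zero => simp
  | succ n ih =>
    rw [pow_succ, ih]
    push_cast
    have he2 : e ^ 2 = 0 := by rw [sq]; exact he
    ring_nf
    rw [he2]
    ring

lemma A1 (p q B c : ℕ) (hp : p.Prime) (hpodd : p % 2 = 1) (hq : q.Prime)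
    (hB1 : 1 < B) (hdvd : p ∣ B - 1)
    (hsum : ∑ i ∈ range q, B ^ i = p ^ c) : False := by
  have hp3 : 3 ≤ p := by have := hp.two_le; omega
  obtain ⟨u, hu⟩ := hdvd
  have hBu : B = 1 + p * u := by omega
  have hu1 : 1 ≤ u := by
    rcases Nat.eq_zero_or_pos u with h0 | h1
    · rw [h0, mul_zero] at hu; omega
    · exact h1
  have hlow : 1 + B ≤ ∑ i ∈ range q, B ^ i := geom_lower B q (by omega) hq.two_le
  have hpltS : p < ∑ i ∈ range q, B ^ i := by
    have : p ≤ B - 1 := Nat.le_of_dvd (by omega) ⟨u, hu⟩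
    omega
  have hc2 : 2 ≤ c := by
    by_contra hcon
    push_neg at hcon
    interval_cases c
    · simp at hsum; omega
    · rw [pow_one] at hsum; omega
  -- step: p = q, working in ZMod p
  haveI : NeZero p := ⟨hp.ne_zero⟩
  have hpq : p = q := by
    have hcast : ((∑ i ∈ range q, B ^ i : ℕ) : ZMod p) = ((q : ℕ) : ZMod p) := by
      push_cast
      have hB0 : (B : ZMod p) = 1 := by
        rw [show ((B : ℕ) : ZMod p) = ((1 + p * u : ℕ) : ZMod p) by rw [← hBu]]
        push_cast
        simp [ZMod.natCast_self]
      rw [Finset.sum_congr rfl (fun i _ => by rw [hB0, one_pow])]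
      simp
    rw [hsum] at hcast
    have hzero : ((p ^ c : ℕ) : ZMod p) = 0 := by
      push_cast
      rw [ZMod.natCast_self]
      exact zero_pow (by omega)
    rw [hzero] at hcast
    have : p ∣ q := (ZMod.natCast_eq_zero_iff q p).mp hcast.symm
    exact ((Nat.prime_dvd_prime_iff_eq hp hq).mp this)
  subst hpq
  -- now work in ZMod (p^2)
  haveI : NeZero (p ^ 2) := ⟨pow_ne_zero 2 hp.ne_zero⟩
  set R := ZMod (p ^ 2)
  have hp2cast : ((p ^ 2 : ℕ) : R) = 0 := ZMod.natCast_self _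
  have he : ((p : R) * (u : R)) * ((p : R) * (u : R)) = 0 := by
    have : ((p : R) * (u : R)) * ((p : R) * (u : R)) = ((p^2 : ℕ) : R) * (u : R) * (u : R) := by
      push_cast [R]
      ring
    rw [this, hp2cast]
    ring
  have hBcast : (B : R) = 1 + (p : R) * (u : R) := by
    rw [show ((B : ℕ) : R) = ((1 + p * u : ℕ) : R) by rw [← hBu]]
    push_cast [R]
    ring
  have hsum2 : ((∑ i ∈ range p, B ^ i : ℕ) : R) = (p : R) := by
    push_cast [R]
    rw [Finset.sum_congr rfl (fun i _ => by
      rw [show ((B : ℕ) : R) = 1 + (p : R) * (u : R) from hBcast,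
          zmod_pow_one_add R ((p : R) * (u : R)) he i])]
    rw [Finset.sum_add_distrib, Finset.sum_const, Finset.card_range]
    have hsumid : ∑ i ∈ range p, ((i : ℕ) : R) * ((p : R) * (u : R)) =
        ((∑ i ∈ range p, i : ℕ) : R) * ((p : R) * (u : R)) := by
      push_cast [R]
      rw [Finset.sum_mul]
    rw [hsumid]
    obtain ⟨j, hj⟩ : p ∣ ∑ i ∈ range p, i := by
      have h2 : (∑ i ∈ range p, i) * 2 = p * (p - 1) := Finset.sum_range_id_mul_two p
      have hdvd2 : p ∣ (∑ i ∈ range p, i) * 2 := ⟨p - 1, by omega⟩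
      have hcop : Nat.Coprime p 2 := by
        rw [Nat.coprime_primes hp Nat.prime_two]
        omega
      exact hcop.dvd_of_dvd_mul_right hdvd2
    rw [hj]
    push_cast [R]
    rw [show ((p : R) * (j : R)) * ((p : R) * (u : R)) = ((p^2 : ℕ):R) * ((j : R) * (u : R)) by push_cast [R]; ring]
    rw [hp2cast]
    simp
  rw [hsum] at hsum2
  have hzero2 : ((p ^ c : ℕ) : R) = 0 := by
    obtain ⟨c', rfl⟩ : ∃ c', c = 2 + c' := ⟨c - 2, by omega⟩
    rw [pow_add]
    push_cast [R]
    rw [show (((p:ℕ) : R)) ^ 2 = ((p^2 : ℕ) : R) by push_cast [R]; ring, hp2cast]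
    ring
  rw [hzero2] at hsum2
  have : p ^ 2 ∣ p := (ZMod.natCast_eq_zero_iff p (p ^ 2)).mp hsum2.symm
  have hle := Nat.le_of_dvd (by omega) this
  nlinarith

lemma size_contra (p r N a s t x z : ℕ) (hpr3 : 3 ≤ p ^ r)
    (hNa : N = 2 ^ a + 1) (hNs : N = p ^ r + 2 ^ s)
    (ha : 1 ≤ a) (ht : 1 ≤ t) (hz : 1 ≤ z) (hx : z + 1 ≤ x)
    (KE : p ^ (r * x) * 2 ^ (t * (x - z)) + 1 = N ^ z) : a + t ≤ z := by
  have hsa : s < a := by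
    have h2 : 2 ^ s < 2 ^ a := by omega
    exact (Nat.pow_lt_pow_iff_right one_lt_two).mp h2
  have hhalf : 2 ^ a = 2 * 2 ^ (a - 1) := by
    rw [← pow_succ']
    congr 1
    omega
  have hs1 : 2 ^ s ≤ 2 ^ (a - 1) := Nat.pow_le_pow_right (by omega) (by omega)
  have hpr : 2 ^ (a - 1) + 1 ≤ p ^ r := by omega
  set X := 2 ^ (a - 1) + 1 with hX
  have hXpos : 0 < X := by positivity
  have h1 : X ^ (z + 1) * 2 ^ t ≤ p ^ (r * x) * 2 ^ (t * (x - z)) := by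
    apply Nat.mul_le_mul
    · calc X ^ (z + 1) ≤ (p ^ r) ^ (z + 1) := Nat.pow_le_pow_left hpr _
      _ ≤ (p ^ r) ^ x := Nat.pow_le_pow_right (by omega) hx
      _ = p ^ (r * x) := by rw [← pow_mul]
    · exact Nat.pow_le_pow_right (by omega) (Nat.le_mul_of_pos_right t (by omega))
  have h2 : p ^ (r * x) * 2 ^ (t * (x - z)) < N ^ z := by omega
  have h3 : N ^ z ≤ (2 * X) ^ z := by
    apply Nat.pow_le_pow_left
    omega
  have h4 : X ^ (z + 1) * 2 ^ t < (2 * X) ^ z := by omega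
  have h5 : X ^ z * (X * 2 ^ t) < X ^ z * 2 ^ z := by
    calc X ^ z * (X * 2 ^ t) = X ^ (z + 1) * 2 ^ t := by rw [pow_succ]; ring
    _ < (2 * X) ^ z := h4
    _ = X ^ z * 2 ^ z := by rw [mul_pow]; ring
  have h6 : X * 2 ^ t < 2 ^ z := Nat.lt_of_mul_lt_mul_left h5
  have h7 : 2 ^ (a - 1 + t) < 2 ^ z := by
    rw [pow_add]
    calc 2 ^ (a - 1) * 2 ^ t ≤ X * 2 ^ t := by
          apply Nat.mul_le_mul_right
          omega
    _ < 2 ^ z := h6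
  have := (Nat.pow_lt_pow_iff_right one_lt_two).mp h7
  omega

set_option maxHeartbeats 2000000 in
theorem stmt_18 (k p r s : ℕ) (hk : 1 < k) (hp : p.Prime) (hpodd : Odd p)
    (hr : 0 < r) (hs : 1 < s) :
    ¬ ∃ x y z : ℕ, 0 < x ∧ 0 < y ∧ 0 < z ∧ x > z ∧ z > y ∧
      (p ^ r * k) ^ x + (2 ^ s * k) ^ y = ((p ^ r + 2 ^ s) * k) ^ z := by
  rintro ⟨x, y, z, hx0, hy0, hz0, hxz, hzy, hE⟩
  have hpm : p % 2 = 1 := Nat.odd_iff.mp hpodd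
  have hp3 : 3 ≤ p := by have := hp.two_le; omega
  have hpr3 : 3 ≤ p ^ r := le_trans hp3 (Nat.le_self_pow (by omega) p)
  have hprodd : p ^ r % 2 = 1 := Nat.odd_iff.mp (hpodd.pow)
  have h2s4 : 4 ≤ 2 ^ s := by
    calc (4:ℕ) = 2 ^ 2 := by norm_num
    _ ≤ 2 ^ s := Nat.pow_le_pow_right (by omega) hs
  set N := p ^ r + 2 ^ s with hN
  have hNodd : N % 2 = 1 := by
    have h2e : 2 ^ s % 2 = 0 := by
      have : (2:ℕ) ∣ 2 ^ s := dvd_pow_self 2 (by omega)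
      omega
    omega
  have hN7 : 7 ≤ N := by omega
  -- Step 1: expand and cancel k^y
  rw [mul_pow, mul_pow, mul_pow] at hE
  have hxy : x = y + (x - y) := by omega
  have hzy' : z = y + (z - y) := by omega
  rw [show k ^ x = k ^ y * k ^ (x - y) by rw [← pow_add, ← hxy],
      show k ^ z = k ^ y * k ^ (z - y) by rw [← pow_add, ← hzy']] at hE
  have hE1 : (p ^ r) ^ x * k ^ (x - y) + (2 ^ s) ^ y = N ^ z * k ^ (z - y) := by
    have hky : 0 < k ^ y := by positivity
    apply Nat.eq_of_mul_eq_mul_left hky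
    calc k ^ y * ((p ^ r) ^ x * k ^ (x - y) + (2 ^ s) ^ y)
        = (p ^ r) ^ x * (k ^ y * k ^ (x - y)) + (2 ^ s) ^ y * k ^ y := by ring
    _ = N ^ z * (k ^ y * k ^ (z - y)) := hE
    _ = k ^ y * (N ^ z * k ^ (z - y)) := by ring
  -- Step 2: k is a power of two
  have hkdvd : k ∣ (2 ^ s) ^ y := by
    have hd1 : k ∣ N ^ z * k ^ (z - y) := Dvd.dvd.mul_left (dvd_pow_self k (by omega)) _
    have hd2 : k ∣ (p ^ r) ^ x * k ^ (x - y) := Dvd.dvd.mul_left (dvd_pow_self k (by omega)) _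
    have : (2 ^ s) ^ y = N ^ z * k ^ (z - y) - (p ^ r) ^ x * k ^ (x - y) := by omega
    rw [this]
    exact Nat.dvd_sub hd1 hd2
  rw [← pow_mul] at hkdvd
  obtain ⟨t, htle, rfl⟩ := (Nat.dvd_prime_pow Nat.prime_two).mp hkdvd
  have ht1 : 1 ≤ t := by
    rcases Nat.eq_zero_or_pos t with h0 | h1
    · rw [h0, pow_zero] at hk; omega
    · exact h1
  rw [← pow_mul, ← pow_mul, ← pow_mul, ← pow_mul] at hE1
  -- hE1 : p^(r*x) * 2^(t*(x-y)) + 2^(s*y) = N^z * 2^(t*(z-y))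
  set α := t * (x - y) with hα
  set β := s * y with hβ
  set γ := t * (z - y) with hγ
  have hαγ : γ < α := by
    have : z - y < x - y := by omega
    exact Nat.mul_lt_mul_of_pos_left this (by omega)
  -- Step 3: β = γ
  have hβγ : β = γ := by
    rcases lt_trichotomy β γ with hlt | heq | hgt
    · exfalso
      have hfac : 2 ^ β * (p ^ (r * x) * 2 ^ (α - β) + 1) = 2 ^ β * (N ^ z * 2 ^ (γ - β)) := by
        calc 2 ^ β * (p ^ (r * x) * 2 ^ (α - β) + 1)
            = p ^ (r * x) * (2 ^ β * 2 ^ (α - β)) + 2 ^ β := by ring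
        _ = p ^ (r * x) * 2 ^ α + 2 ^ β := by rw [← pow_add, Nat.add_sub_cancel' (by omega : β ≤ α)]
        _ = N ^ z * 2 ^ γ := hE1
        _ = N ^ z * (2 ^ β * 2 ^ (γ - β)) := by rw [← pow_add, Nat.add_sub_cancel' (by omega : β ≤ γ)]
        _ = 2 ^ β * (N ^ z * 2 ^ (γ - β)) := by ring
      have hcan := Nat.eq_of_mul_eq_mul_left (show 0 < 2 ^ β by positivity) hfac
      have he1 : 2 ∣ p ^ (r * x) * 2 ^ (α - β) :=
        Dvd.dvd.mul_left (dvd_pow_self 2 (by omega : α - β ≠ 0)) _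
      have he2 : 2 ∣ N ^ z * 2 ^ (γ - β) :=
        Dvd.dvd.mul_left (dvd_pow_self 2 (by omega : γ - β ≠ 0)) _
      obtain ⟨w1, hw1⟩ := he1
      obtain ⟨w2, hw2⟩ := he2
      omega
    · exact heq
    · exfalso
      have hfac : 2 ^ γ * (p ^ (r * x) * 2 ^ (α - γ) + 2 ^ (β - γ)) = 2 ^ γ * N ^ z := by
        calc 2 ^ γ * (p ^ (r * x) * 2 ^ (α - γ) + 2 ^ (β - γ))
            = p ^ (r * x) * (2 ^ γ * 2 ^ (α - γ)) + (2 ^ γ * 2 ^ (β - γ)) := by ring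
        _ = p ^ (r * x) * 2 ^ α + 2 ^ β := by
              rw [← pow_add, ← pow_add, Nat.add_sub_cancel' (by omega : γ ≤ α),
                  Nat.add_sub_cancel' (by omega : γ ≤ β)]
        _ = N ^ z * 2 ^ γ := hE1
        _ = 2 ^ γ * N ^ z := by ring
      have hcan := Nat.eq_of_mul_eq_mul_left (show 0 < 2 ^ γ by positivity) hfac
      have he1 : 2 ∣ p ^ (r * x) * 2 ^ (α - γ) :=
        Dvd.dvd.mul_left (dvd_pow_self 2 (by omega : α - γ ≠ 0)) _
      have he2 : 2 ∣ 2 ^ (β - γ) := dvd_pow_self 2 (by omega : β - γ ≠ 0)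
      have hNzodd : N ^ z % 2 = 1 := Nat.odd_iff.mp ((Nat.odd_iff.mpr hNodd).pow)
      obtain ⟨w1, hw1⟩ := he1
      obtain ⟨w2, hw2⟩ := he2
      omega
  -- Key equation
  have KE : p ^ (r * x) * 2 ^ (t * (x - z)) + 1 = N ^ z := by
    have hfac : 2 ^ γ * (p ^ (r * x) * 2 ^ (t * (x - z)) + 1) = 2 ^ γ * N ^ z := by
      calc 2 ^ γ * (p ^ (r * x) * 2 ^ (t * (x - z)) + 1)
          = p ^ (r * x) * (2 ^ γ * 2 ^ (t * (x - z))) + 2 ^ γ := by ring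
      _ = p ^ (r * x) * 2 ^ α + 2 ^ β := by
            rw [← pow_add, hβγ]
            have hsum : γ + t * (x - z) = α := by
              rw [hγ, hα, ← Nat.mul_add]
              congr 1
              omega
            rw [hsum]
      _ = N ^ z * 2 ^ γ := hE1
      _ = 2 ^ γ * N ^ z := by ring
    exact Nat.eq_of_mul_eq_mul_left (show 0 < 2 ^ γ by positivity) hfac
  -- common facts
  have hx3 : 3 ≤ x := by omega
  have hrx3 : 3 ≤ r * x := by
    calc 3 ≤ x := hx3
    _ = 1 * x := (one_mul x).symm
    _ ≤ r * x := Nat.mul_le_mul_right x (by omega)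
  have hsub : N ^ z - 1 = p ^ (r * x) * 2 ^ (t * (x - z)) := by omega
  have hdvdall : ∀ D : ℕ, D ∣ N ^ z - 1 → D % 2 = 1 → ∃ c, D = p ^ c := by
    intro D hD hDo
    rw [hsub] at hD
    exact odd_dvd_two_mul_prime_pow p (r * x) (t * (x - z)) D hp hD hDo
  have keyG : ∀ G : ℕ, 0 < G → G ∣ N ^ z - 1 → ¬ p ∣ G → ∃ f, G = 2 ^ f := by
    intro G hG0 hGdvd hGp
    have hop := Nat.ordProj_mul_ordCompl_eq_self G 2
    have hoodd : ordCompl[2] G % 2 = 1 := by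
      have h1 := Nat.not_dvd_ordCompl Nat.prime_two (by omega : G ≠ 0)
      omega
    have hodvd : ordCompl[2] G ∣ N ^ z - 1 := dvd_trans (Nat.ordCompl_dvd G 2) hGdvd
    obtain ⟨c, hc⟩ := hdvdall _ hodvd hoodd
    have hc0 : c = 0 := by
      by_contra hcne
      exact hGp (dvd_trans (hc ▸ dvd_pow_self p hcne) (Nat.ordCompl_dvd G 2))
    refine ⟨G.factorization 2, ?_⟩
    calc G = 2 ^ G.factorization 2 * (G / 2 ^ G.factorization 2) := hop.symm
    _ = 2 ^ G.factorization 2 * p ^ c := by rw [← hc]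
    _ = 2 ^ G.factorization 2 := by rw [hc0, pow_zero, mul_one]
  have hA : (s + t) * y = t * z := by
    have h2 : s * y = t * (z - y) := by rw [hβ, hγ] at hβγ; exact hβγ
    have h1 : t * (z - y) + t * y = t * z := by
      rw [← Nat.mul_add]
      congr 1
      omega
    calc (s + t) * y = s * y + t * y := by ring
    _ = t * (z - y) + t * y := by rw [h2]
    _ = t * z := h1
  have hNzpos : 1 ≤ N ^ z := Nat.one_le_pow _ _ (by omega)
  have hp2 : ¬ p ∣ 2 := by
    intro hcon
    have := Nat.le_of_dvd (by omega) hcon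
    omega
  by_cases hoddfac : ∃ q, q.Prime ∧ q ∣ z ∧ q ≠ 2
  · obtain ⟨q, hq, hqz, hq2⟩ := hoddfac
    have hqodd : q % 2 = 1 := Nat.odd_iff.mp (hq.odd_of_ne_two hq2)
    obtain ⟨w, hzw⟩ : ∃ w, z = q * w := ⟨z / q, (Nat.mul_div_cancel' hqz).symm⟩
    have hw1 : 1 ≤ w := by
      rcases Nat.eq_zero_or_pos w with h0 | h1
      · rw [h0, mul_zero] at hzw; omega
      · exact h1
    have hB7 : 7 ≤ N ^ w := le_trans hN7 (Nat.le_self_pow (by omega) N)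
    have hBodd : N ^ w % 2 = 1 := Nat.odd_iff.mp ((Nat.odd_iff.mpr hNodd).pow)
    have hBq : (N ^ w) ^ q - 1 = N ^ z - 1 := by
      rw [← pow_mul, hzw, mul_comm]
    have hSdvd : (∑ i ∈ range q, (N ^ w) ^ i) ∣ N ^ z - 1 := by
      rw [← hBq]
      exact geom_dvd (N ^ w) q (by omega)
    have hSodd : (∑ i ∈ range q, (N ^ w) ^ i) % 2 = 1 := by
      have := geom_parity (N ^ w) q hBodd
      omega
    obtain ⟨c, hc⟩ := hdvdall _ hSdvd hSodd
    by_cases hpB : p ∣ N ^ w - 1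
    · exact A1 p q (N ^ w) c hp hpm hq (by omega) hpB hc
    · have hBm1dvd : N ^ w - 1 ∣ N ^ z - 1 := by
        rw [← hBq]
        simpa using Nat.sub_dvd_pow_sub_pow (N ^ w) 1 q
      obtain ⟨e, he⟩ := keyG (N ^ w - 1) (by omega) hBm1dvd hpB
      rcases eq_or_lt_of_le hw1 with hwone | hw2
      · -- w = 1 : z = q odd prime, N - 1 = 2^e, size contradiction
        have hzq : z = q := by rw [← hwone, mul_one] at hzw; exact hzw
        have heN : N - 1 = 2 ^ e := by rw [← hwone, pow_one] at he; exact he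
        have he3 : 3 ≤ e := by
          by_contra hcon
          push_neg at hcon
          interval_cases e <;> omega
        have hsize := size_contra p r N e s t x z hpr3 (by omega) rfl (by omega) ht1
          (by omega) (by omega) KE
        have hzprime : z.Prime := hzq ▸ hq
        have hzst : z ∣ (s + t) * y := ⟨t, by rw [hA]; ring⟩
        have hzle : z ≤ s + t := by
          rcases (Nat.Prime.dvd_mul hzprime).mp hzst with h1 | h2
          · exact Nat.le_of_dvd (by omega) h1
          · exact absurd (Nat.le_of_dvd (by omega) h2) (by omega)
        -- s < e
        have hse : s < e := by
          have h2 : 2 ^ s < 2 ^ e := by omega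
          exact (Nat.pow_lt_pow_iff_right one_lt_two).mp h2
        omega
      · -- w ≥ 2
        exact absurd he (pow_sub_one_ne_two_pow N w e hN7 hNodd (by omega))
  · -- z is a power of two
    push_neg at hoddfac
    have hzpow : z = 2 ^ z.primeFactorsList.length :=
      Nat.eq_prime_pow_of_unique_prime_dvd (by omega)
        (fun {d} hd hdz => hoddfac d hd hdz)
    obtain ⟨f, hzf⟩ : ∃ f, z = 2 ^ f := ⟨_, hzpow⟩
    clear hzpow
    have hf1 : 1 ≤ f := by
      rcases Nat.eq_zero_or_pos f with h0 | h1
      · rw [h0, pow_zero] at hzf; omega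
      · exact h1
    rcases eq_or_lt_of_le hf1 with hfone | hf2
    · -- z = 2
      have hz2 : z = 2 := by rw [← hfone, pow_one] at hzf; exact hzf
      by_cases hpN : p ∣ N - 1
      · -- Mersenne case
        have hpN1 : ¬ p ∣ N + 1 := by
          intro hcon
          have hsub2 : N + 1 - (N - 1) = 2 := by omega
          exact hp2 (hsub2 ▸ Nat.dvd_sub hcon hpN)
        have hNp1dvd : N + 1 ∣ N ^ z - 1 := by
          rw [hz2]
          have h1 : N ^ 2 - 1 = (N + 1) * (N - 1) := by simpa using sq_tsub_sq N 1
          rw [h1]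
          exact dvd_mul_right _ _
        obtain ⟨c, hc⟩ := keyG (N + 1) (by omega) hNp1dvd hpN1
        have hc3 : 3 ≤ c := by
          by_contra hcon
          push_neg at hcon
          interval_cases c <;> omega
        have hc2 : 2 ^ c = 2 * 2 ^ (c - 1) := by
          rw [← pow_succ']
          congr 1
          omega
        have hcc2 : 2 ^ (c - 1) = 2 * 2 ^ (c - 2) := by
          rw [← pow_succ']
          congr 1
          omega
        have hNO : N - 1 = 2 * (2 ^ (c - 1) - 1) := by omega
        have hOodd : (2 ^ (c - 1) - 1) % 2 = 1 := by omega
        have hOdvd : (2 ^ (c - 1) - 1) ∣ N ^ z - 1 := by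
          have hONm1 : (2 ^ (c - 1) - 1) ∣ N - 1 := ⟨2, by omega⟩
          have hNm1 : N - 1 ∣ N ^ z - 1 := by simpa using Nat.sub_dvd_pow_sub_pow N 1 z
          exact dvd_trans hONm1 hNm1
        obtain ⟨c0, hc0⟩ := hdvdall _ hOdvd hOodd
        have hexp : N ^ z - 1 = 2 ^ (c + 1) * (2 ^ (c - 1) - 1) := by
          rw [hz2]
          have h1 : N ^ 2 - 1 = (N + 1) * (N - 1) := by simpa using sq_tsub_sq N 1
          rw [h1, hc, hNO, pow_succ]
          ring
        have hpdvd : p ^ (r * x) ∣ 2 ^ (c + 1) * (2 ^ (c - 1) - 1) := by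
          rw [← hexp, hsub]
          exact dvd_mul_right _ _
        have hcopp2 : Nat.Coprime p 2 := (Nat.coprime_primes hp Nat.prime_two).mpr (by omega)
        have hpO : p ^ (r * x) ∣ 2 ^ (c - 1) - 1 :=
          (hcopp2.pow (r * x) (c + 1)).dvd_of_dvd_mul_left hpdvd
        rw [hc0] at hpO
        have hlec : r * x ≤ c0 := (Nat.pow_dvd_pow_iff_le_right hp.one_lt).mp hpO
        exact mersenne_catalan p c0 (c - 1) hp hpm (by omega) (by omega)
      · -- N - 1 = 2^a, size contra
        obtain ⟨a, ha⟩ := keyG (N - 1) (by omega)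
          (by simpa using Nat.sub_dvd_pow_sub_pow N 1 z) hpN
        have ha3 : 3 ≤ a := by
          by_contra hcon
          push_neg at hcon
          interval_cases a <;> omega
        have hsize := size_contra p r N a s t x z hpr3 (by omega) rfl (by omega) ht1
          (by omega) (by omega) KE
        omega
    · -- f ≥ 2
      have hpow1 : 2 ^ f = 2 ^ (f - 1) * 2 := by
        rw [← pow_succ]
        congr 1
        omega
      have hpow2 : 2 ^ (f - 1) = 2 ^ (f - 2) * 2 := by
        rw [← pow_succ]
        congr 1
        omega
      have hBB : N ^ 2 ^ (f - 1) * N ^ 2 ^ (f - 1) = N ^ z := by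
        rw [← pow_add, hzf]
        congr 1
        omega
      have hCB : N ^ 2 ^ (f - 2) * N ^ 2 ^ (f - 2) = N ^ 2 ^ (f - 1) := by
        rw [← pow_add]
        congr 1
        omega
      have hCodd : N ^ 2 ^ (f - 2) % 2 = 1 := Nat.odd_iff.mp ((Nat.odd_iff.mpr hNodd).pow)
      obtain ⟨d, hd⟩ : ∃ d, N ^ 2 ^ (f - 2) = 2 * d + 1 := ⟨N ^ 2 ^ (f - 2) / 2, by omega⟩
      obtain ⟨ee, hee⟩ := Nat.even_mul_succ_self d
      have hB8 : N ^ 2 ^ (f - 1) = 8 * ee + 1 := by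
        have h1 : (2 * d + 1) * (2 * d + 1) = 4 * (d * (d + 1)) + 1 := by ring
        rw [← hCB, hd, h1, hee]
        omega
      have hB49 : 49 ≤ N ^ 2 ^ (f - 1) := by
        have h2f : 2 ≤ 2 ^ (f - 1) := by
          calc 2 = 2 ^ 1 := (pow_one 2).symm
          _ ≤ 2 ^ (f - 1) := Nat.pow_le_pow_right (by omega) (by omega)
        calc (49 : ℕ) = 7 ^ 2 := by norm_num
        _ ≤ N ^ 2 := Nat.pow_le_pow_left hN7 2
        _ ≤ N ^ 2 ^ (f - 1) := Nat.pow_le_pow_right (by omega) h2f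
      have hfacBB : N ^ z - 1 = (N ^ 2 ^ (f - 1) + 1) * (N ^ 2 ^ (f - 1) - 1) := by
        rw [← hBB, mul_self_tsub_one]
      by_cases hpB : p ∣ N ^ 2 ^ (f - 1) - 1
      · have hpB1 : ¬ p ∣ N ^ 2 ^ (f - 1) + 1 := by
          intro hcon
          have hsub2 : (N ^ 2 ^ (f - 1) + 1) - (N ^ 2 ^ (f - 1) - 1) = 2 := by omega
          exact hp2 (hsub2 ▸ Nat.dvd_sub hcon hpB)
        obtain ⟨c, hc⟩ := keyG (N ^ 2 ^ (f - 1) + 1) (by omega)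
          (by rw [hfacBB]; exact dvd_mul_right _ _) hpB1
        have hc3 : 3 ≤ c := by
          by_contra hcon
          push_neg at hcon
          interval_cases c <;> omega
        have h8 : (8 : ℕ) ∣ 2 ^ c := by
          calc (8 : ℕ) = 2 ^ 3 := by norm_num
          _ ∣ 2 ^ c := pow_dvd_pow 2 hc3
        omega
      · obtain ⟨e, he⟩ := keyG (N ^ 2 ^ (f - 1) - 1) (by omega)
          (by rw [hfacBB]; exact dvd_mul_left _ _) hpB
        refine absurd he (pow_sub_one_ne_two_pow N (2 ^ (f - 1)) e hN7 hNodd ?_)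
        calc 2 = 2 ^ 1 := (pow_one 2).symm
        _ ≤ 2 ^ (f - 1) := Nat.pow_le_pow_right (by omega) (by omega)
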